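/- For a nonnegative random variable X with E[X] = g1 > 0 and E[X²] = g2 finite, the Laplace transform satisfies E[e^{-sX}] ≤ 1 - g1²/g2 + (g1²/g2)·exp(-(g2/g1)·s) for all s ≥ 0. -/

import Mathlib

open MeasureTheory Set

lemma vk_key (a : ℝ) (ha : 0 < a) (t : ℝ) (ht : 0 ≤ t) :
    Real.exp (-t) ≤ 1 + ((2*(Real.exp (-a) - 1) + a * Real.exp (-a))/a) * t
      + ((1 - Real.exp (-a) - a * Real.exp (-a))/a^2) * t^2 := by
  set u := Real.exp (-a) with hu
  set β := (2*(u - 1) + a*u)/a with hβ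
  set γ := (1 - u - a*u)/a^2 with hγdef
  have hua : u * Real.exp a = 1 := by rw [hu, ← Real.exp_add]; simp
  have hea := Real.exp_pos a
  have hupos : 0 < u := Real.exp_pos (-a)
  have hD : 0 < 1 - u - a*u := by
    have h1 : a + 1 < Real.exp a := Real.add_one_lt_exp ha.ne'
    nlinarith
  have hγ : 0 < γ := by rw [hγdef]; positivity
  set r := (a - 2 + 2*u + a*u)/(1 - u - a*u) with hrdef
  have hquad : 1 + a + a^2/2 ≤ Real.exp a := Real.quadratic_le_exp_of_nonneg ha.le
  have hkey2 : u*(2 + 2*a + a^2) ≤ 2 := by nlinarith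
  have hra : r ≤ a := by
    rw [hrdef, div_le_iff₀ hD]
    nlinarith
  set G : ℝ → ℝ := fun t => Real.exp t * (1 + β*t + γ*t^2) - 1 with hGdef
  have hG : ∀ x : ℝ, HasDerivAt G (Real.exp x * (γ*(x-a)*(x-r))) x := by
    intro x
    have hpoly : HasDerivAt (fun y : ℝ => 1 + β*y + γ*y^2)
        (0 + β*1 + γ*((2:ℕ)*x^1)) x :=
      (((hasDerivAt_const x (1:ℝ)).add ((hasDerivAt_id x).const_mul β)).add
        ((hasDerivAt_pow 2 x).const_mul γ))
    have hmul := ((Real.hasDerivAt_exp x).mul hpoly).sub_const 1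
    refine hmul.congr_deriv ?_
    have key : γ*(x-a)*(x-r) = (1 + β*x + γ*x^2) + (β + 2*γ*x) := by
      have hr : r * (1 - u - a*u) = a - 2 + 2*u + a*u := by
        rw [hrdef]; exact div_mul_cancel₀ _ hD.ne'
      have ha' : a ≠ 0 := ha.ne'
      rw [hβ, hγdef]
      field_simp
      linear_combination (a - x) * hr
    rw [key]; push_cast; ring
  have hderiv : ∀ x, deriv G x = Real.exp x * (γ*(x-a)*(x-r)) := fun x => (hG x).deriv
  have hdiff : Differentiable ℝ G := fun x => (hG x).differentiableAt
  have hcont : Continuous G := hdiff.continuous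
  set r0 := max r 0 with hr0
  have hr00 : 0 ≤ r0 := le_max_right _ _
  have hr0a : r0 ≤ a := max_le hra ha.le
  have G0 : G 0 = 0 := by
    show Real.exp 0 * (1 + β*0 + γ*0^2) - 1 = 0
    simp
  have Ga : G a = 0 := by
    show Real.exp a * (1 + β*a + γ*a^2) - 1 = 0
    have hq : 1 + β*a + γ*a^2 = u := by rw [hβ, hγdef]; field_simp; ring
    rw [hq, hu, ← Real.exp_add]; simp
  have mono1 : MonotoneOn G (Icc 0 r0) := by
    apply monotoneOn_of_deriv_nonneg (convex_Icc _ _) hcont.continuousOn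
      hdiff.differentiableOn
    intro x hx
    rw [interior_Icc] at hx
    have hxr : x < r := by
      rcases lt_max_iff.mp hx.2 with h | h
      · exact h
      · linarith [hx.1]
    have hxa : x < a := lt_of_lt_of_le hx.2 hr0a
    rw [hderiv]
    have hf : 0 ≤ γ * ((a - x) * (r - x)) :=
      mul_nonneg hγ.le (mul_nonneg (by linarith) (by linarith))
    have heq : Real.exp x * (γ*(x-a)*(x-r)) = Real.exp x * (γ * ((a-x)*(r-x))) := by ring
    rw [heq]
    exact mul_nonneg (Real.exp_pos x).le hf
  have anti : AntitoneOn G (Icc r0 a) := by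
    apply antitoneOn_of_deriv_nonpos (convex_Icc _ _) hcont.continuousOn
      hdiff.differentiableOn
    intro x hx
    rw [interior_Icc] at hx
    have hxr : r < x := lt_of_le_of_lt (le_max_left r 0) hx.1
    rw [hderiv]
    have hf : 0 ≤ γ * ((a - x) * (x - r)) :=
      mul_nonneg hγ.le (mul_nonneg (by linarith [hx.2]) (by linarith))
    have heq : Real.exp x * (γ*(x-a)*(x-r)) = -(Real.exp x * (γ * ((a-x)*(x-r)))) := by ring
    rw [heq]
    exact neg_nonpos.mpr (mul_nonneg (Real.exp_pos x).le hf)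
  have mono2 : MonotoneOn G (Ici a) := by
    apply monotoneOn_of_deriv_nonneg (convex_Ici _) hcont.continuousOn
      hdiff.differentiableOn
    intro x hx
    rw [interior_Ici] at hx
    have hxa : a < x := hx
    rw [hderiv]
    have hf : 0 ≤ γ * ((x - a) * (x - r)) :=
      mul_nonneg hγ.le (mul_nonneg (by linarith) (by linarith))
    have heq : Real.exp x * (γ*(x-a)*(x-r)) = Real.exp x * (γ * ((x-a)*(x-r))) := by ring
    rw [heq]
    exact mul_nonneg (Real.exp_pos x).le hf
  have hGt : 0 ≤ G t := by
    rcases le_total t r0 with h | h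
    · have h1 := mono1 ⟨le_rfl, hr00⟩ ⟨ht, h⟩ ht
      rw [G0] at h1; exact h1
    · rcases le_total t a with h2 | h2
      · have h1 := anti ⟨h, h2⟩ ⟨hr0a, le_rfl⟩ h2
        rw [Ga] at h1; exact h1
      · have h1 := mono2 self_mem_Ici h2 h2
        rw [Ga] at h1; exact h1
  have hGt' : 0 ≤ Real.exp t * (1 + β*t + γ*t^2) - 1 := hGt
  have hmul : Real.exp (-t) * Real.exp t = 1 := by rw [← Real.exp_add]; simp
  have hent := Real.exp_pos (-t)
  calc Real.exp (-t) = Real.exp (-t) * 1 := by ring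
    _ ≤ Real.exp (-t) * (Real.exp t * (1 + β*t + γ*t^2)) :=
        mul_le_mul_of_nonneg_left (by linarith) hent.le
    _ = (Real.exp (-t) * Real.exp t) * (1 + β*t + γ*t^2) := by ring
    _ = 1 + β*t + γ*t^2 := by rw [hmul, one_mul]

/-- For a nonnegative random variable with law `ν`, mean `g1 > 0` and finite second
moment `g2`, the Laplace transform satisfies the Vasilyev–Kozlov upper bound
`E[e^{-sX}] ≤ 1 - g1²/g2 + (g1²/g2)·exp(-(g2/g1)·s)` for all `s ≥ 0`. -/
theorem lst_le_vasilyev_kozlov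
    (ν : Measure ℝ) [IsProbabilityMeasure ν] (hνpos : ν (Set.Iio 0) = 0)
    (g1 g2 : ℝ) (hg1 : 0 < g1)
    (hint1 : Integrable (fun x => x) ν)
    (hint2 : Integrable (fun x => x ^ 2) ν)
    (hmean : ∫ x, x ∂ν = g1) (hsec : ∫ x, x ^ 2 ∂ν = g2) :
    ∀ s ≥ (0 : ℝ),
      (∫ x, Real.exp (-s * x) ∂ν) ≤
        1 - g1 ^ 2 / g2 + (g1 ^ 2 / g2) * Real.exp (-(g2 / g1) * s) := by
  -- a.e. nonnegativity
  have hxnn : ∀ᵐ x ∂ν, 0 ≤ x := by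
    rw [ae_iff]
    convert hνpos using 2
    ext x; simp [Set.mem_Iio, not_le]
  -- second moment dominates square of mean
  have hvar : g1^2 ≤ g2 := by
    have h0 : 0 ≤ ∫ x, (x - g1)^2 ∂ν := integral_nonneg fun x => sq_nonneg _
    have heq : ∫ x, (x - g1)^2 ∂ν = g2 - 2*g1*g1 + g1^2 := by
      have hfun : (fun x : ℝ => (x - g1)^2) = fun x => x^2 - (2*g1)*x + g1^2 := by
        funext x; ring
      have hI1 : Integrable (fun x => x^2 - 2*g1*x) ν := hint2.sub (hint1.const_mul _)
      rw [hfun, integral_add hI1 (integrable_const _),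
        integral_sub hint2 (hint1.const_mul _), integral_const_mul, hmean, hsec,
        integral_const]
      simp
    nlinarith
  have hg2 : 0 < g2 := lt_of_lt_of_le (by positivity) hvar
  intro s hs
  rcases eq_or_lt_of_le hs with hs0 | hs0
  · -- s = 0
    subst hs0
    simp
  -- s > 0
  set c := g2 / g1 with hc
  have hcpos : 0 < c := div_pos hg2 hg1
  set a := s * c with ha
  have hapos : 0 < a := mul_pos hs0 hcpos
  set u := Real.exp (-a) with hudef
  set β := (2*(u - 1) + a*u)/a with hβ
  set γ := (1 - u - a*u)/a^2 with hγdef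
  -- pointwise a.e. bound
  have hae : ∀ᵐ x ∂ν, Real.exp (-s * x) ≤ 1 + (β*s)*x + (γ*s^2)*x^2 := by
    filter_upwards [hxnn] with x hx
    have := vk_key a hapos (s*x) (by positivity)
    calc Real.exp (-s*x) = Real.exp (-(s*x)) := by ring_nf
      _ ≤ 1 + β*(s*x) + γ*(s*x)^2 := this
      _ = 1 + (β*s)*x + (γ*s^2)*x^2 := by ring
  -- integrability
  have hmeas : AEStronglyMeasurable (fun x => Real.exp (-s * x)) ν :=
    (Real.continuous_exp.comp (continuous_const.mul continuous_id)).aestronglyMeasurable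
  have hL : Integrable (fun x => Real.exp (-s * x)) ν := by
    apply Integrable.mono' (integrable_const (1:ℝ)) hmeas
    filter_upwards [hxnn] with x hx
    rw [Real.norm_eq_abs, abs_of_pos (Real.exp_pos _)]
    apply Real.exp_le_one_iff.mpr
    nlinarith
  have hR : Integrable (fun x => 1 + (β*s)*x + (γ*s^2)*x^2) ν :=
    ((integrable_const (1:ℝ)).add (hint1.const_mul _)).add (hint2.const_mul _)
  have hle := integral_mono_ae hL hR hae
  have hRval : ∫ x, (1 + (β*s)*x + (γ*s^2)*x^2) ∂ν = 1 + (β*s)*g1 + (γ*s^2)*g2 := by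
    have hI2 : Integrable (fun x => 1 + (β*s)*x) ν := (integrable_const (1:ℝ)).add (hint1.const_mul _)
    rw [integral_add hI2 (hint2.const_mul _),
      integral_add (integrable_const (1:ℝ)) (hint1.const_mul _),
      integral_const_mul, integral_const_mul, hmean, hsec, integral_const]
    simp
  rw [hRval] at hle
  refine hle.trans (le_of_eq ?_)
  have hexp : Real.exp (-(g2/g1) * s) = u := by
    rw [hudef]; congr 1; rw [ha, hc]; ring
  rw [hexp, hβ, hγdef, ha, hc]
  field_simp
  ring
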